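/- Let n ≥ 4. If there exists a set of μ' mutually orthogonal cyclic ℓ-cycle systems of the complete graph K_n (with vertex set Z_n), then μ' ≤ n − 3. That is, μ'(ℓ,n) ≤ n − 3. -/

import Mathlib

/-- The edge set of the closed walk through `f 0, f 1, …, f (ℓ-1), f 0`. -/
def cycleEdges {V : Type*} [DecidableEq V] (ℓ : ℕ) (f : Fin ℓ → V) : Finset (Sym2 V) :=
  Finset.univ.image (fun i : Fin ℓ => s(f i, f ⟨(i.val + 1) % ℓ, Nat.mod_lt _ i.pos⟩))

/-- `E` is the edge set of an `ℓ`-cycle. -/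
def IsCycle {V : Type*} [DecidableEq V] (ℓ : ℕ) (E : Finset (Sym2 V)) : Prop :=
  ∃ f : Fin ℓ → V, Function.Injective f ∧ E = cycleEdges ℓ f

/-- `F` is an `ℓ`-cycle system of the complete graph on `V`: a set of `ℓ`-cycles whose
edge sets partition the edge set of the complete graph. -/
def IsCycleSystem {V : Type*} [DecidableEq V] (ℓ : ℕ) (F : Set (Finset (Sym2 V))) : Prop :=
  (∀ E ∈ F, IsCycle ℓ E) ∧
  F.Pairwise (fun E E' => Disjoint E E') ∧
  (∀ e : Sym2 V, ¬ e.IsDiag ↔ ∃ E ∈ F, e ∈ E)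

/-- Two cycle systems are orthogonal when any two cycles, one from each,
share at most one edge. -/
def Orthog {V : Type*} [DecidableEq V] (F F' : Set (Finset (Sym2 V))) : Prop :=
  ∀ E ∈ F, ∀ E' ∈ F', (E ∩ E').card ≤ 1

/-- Translation of a cycle (given by its edge set) by `g ∈ ZMod n`. -/
def translateCycle {n : ℕ} (g : ZMod n) (E : Finset (Sym2 (ZMod n))) : Finset (Sym2 (ZMod n)) :=
  E.image (Sym2.map (· + g))

/-- A cycle system of the complete graph on `ZMod n` is cyclic if closed under translation. -/
def IsCyclicSystem {n : ℕ} (F : Set (Finset (Sym2 (ZMod n)))) : Prop :=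
  ∀ E ∈ F, ∀ g : ZMod n, translateCycle g E ∈ F

set_option linter.unusedSectionVars false

section AuxTest

private lemma zmod_two_ne_zero' {ℓ : ℕ} (hl : 3 ≤ ℓ) : (2 : ZMod ℓ) ≠ 0 := by
  haveI : NeZero ℓ := ⟨by omega⟩
  intro h
  rw [show ((2:ZMod ℓ)) = ((2:ℕ):ZMod ℓ) by push_cast; ring,
    ZMod.natCast_eq_zero_iff] at h
  have := Nat.le_of_dvd (by norm_num) h
  omega

private lemma zmod_one_ne_zero' {ℓ : ℕ} (hl : 3 ≤ ℓ) : (1 : ZMod ℓ) ≠ 0 := by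
  intro h
  apply zmod_two_ne_zero' hl
  rw [show (2:ZMod ℓ) = 1 + 1 by ring, h, add_zero]

private def zcyc {V : Type*} [DecidableEq V] (ℓ : ℕ) [NeZero ℓ] (g : ZMod ℓ → V) :
    Finset (Sym2 V) :=
  Finset.univ.image (fun i : ZMod ℓ => s(g i, g (i + 1)))

private lemma cycle_repr {V : Type*} [DecidableEq V] {ℓ : ℕ} [NeZero ℓ] (hl : 3 ≤ ℓ)
    {E : Finset (Sym2 V)} (hE : IsCycle ℓ E) :
    ∃ g : ZMod ℓ → V, Function.Injective g ∧ E = zcyc ℓ g := by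
  haveI : Fact (1 < ℓ) := ⟨by omega⟩
  obtain ⟨f, hf, rfl⟩ := hE
  refine ⟨fun i => f ⟨i.val, i.val_lt⟩, ?_, ?_⟩
  · intro i j hij
    exact ZMod.val_injective ℓ (congrArg Fin.val (hf hij))
  · ext e
    simp only [cycleEdges, zcyc, Finset.mem_image, Finset.mem_univ, true_and]
    constructor
    · rintro ⟨j, rfl⟩
      refine ⟨(j.val : ZMod ℓ), ?_⟩
      have h1 : f ⟨((j.val : ZMod ℓ)).val, ZMod.val_lt ((j.val : ZMod ℓ))⟩ = f j := by
        apply congrArg f; apply Fin.ext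
        simp [ZMod.val_natCast, Nat.mod_eq_of_lt j.isLt]
      have h2 : f ⟨((j.val : ZMod ℓ) + 1).val, ZMod.val_lt ((j.val : ZMod ℓ) + 1)⟩
          = f ⟨(j.val + 1) % ℓ, Nat.mod_lt _ j.pos⟩ := by
        apply congrArg f; apply Fin.ext
        show ((j.val : ZMod ℓ) + 1).val = (j.val + 1) % ℓ
        rw [show ((j.val : ZMod ℓ) + 1) = ((j.val + 1 : ℕ) : ZMod ℓ) by push_cast; ring,
          ZMod.val_natCast]
      rw [h1, h2]
    · rintro ⟨i, rfl⟩
      refine ⟨⟨i.val, i.val_lt⟩, ?_⟩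
      have h2 : f ⟨((⟨i.val, i.val_lt⟩ : Fin ℓ).val + 1) % ℓ, Nat.mod_lt _ (Fin.pos (⟨i.val, i.val_lt⟩ : Fin ℓ))⟩
          = f ⟨(i + 1).val, ZMod.val_lt (i + 1)⟩ := by
        apply congrArg f; apply Fin.ext
        show (i.val + 1) % ℓ = (i + 1).val
        rw [ZMod.val_add, ZMod.val_one]
      rw [← h2]

end AuxTest
section Aux2
variable {V : Type*} [DecidableEq V] {ℓ : ℕ} [NeZero ℓ] {g : ZMod ℓ → V}

private lemma zcyc_mem (g : ZMod ℓ → V) (i : ZMod ℓ) : s(g i, g (i + 1)) ∈ zcyc ℓ g :=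
  Finset.mem_image_of_mem _ (Finset.mem_univ i)

private lemma zcyc_fun_inj (hl : 3 ≤ ℓ) (hg : Function.Injective g) :
    Function.Injective (fun i : ZMod ℓ => s(g i, g (i + 1))) := by
  intro i j h
  rw [Sym2.eq_iff] at h
  rcases h with ⟨h1, -⟩ | ⟨h1, h2⟩
  · exact hg h1
  · have h3 : i = j + 1 := hg h1
    have h4 : i + 1 = j := hg h2
    exact absurd (by linear_combination h4 - h3 : (2 : ZMod ℓ) = 0) (zmod_two_ne_zero' hl)

private lemma zcyc_card (hl : 3 ≤ ℓ) (hg : Function.Injective g) : (zcyc ℓ g).card = ℓ := by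
  rw [zcyc, Finset.card_image_of_injective _ (zcyc_fun_inj hl hg), Finset.card_univ, ZMod.card]

private lemma zcyc_nondiag (hl : 3 ≤ ℓ) (hg : Function.Injective g) :
    ∀ e ∈ zcyc ℓ g, ¬ e.IsDiag := by
  intro e he
  obtain ⟨i, -, rfl⟩ := Finset.mem_image.mp he
  rw [Sym2.mk_isDiag_iff]
  intro h
  have := hg h
  exact zmod_one_ne_zero' hl (by linear_combination - this)

private lemma zcyc_nbrs (hl : 3 ≤ ℓ) (hg : Function.Injective g) {v w : V}
    (hvw : s(v, w) ∈ zcyc ℓ g) :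
    ∃ u, u ≠ w ∧ u ≠ v ∧ s(v, u) ∈ zcyc ℓ g ∧
      ∀ z, s(v, z) ∈ zcyc ℓ g → z = w ∨ z = u := by
  have h2 := zmod_two_ne_zero' hl
  have h1 := zmod_one_ne_zero' hl
  obtain ⟨i, -, hi⟩ := Finset.mem_image.mp hvw
  rw [Sym2.eq_iff] at hi
  rcases hi with ⟨hiv, hiw⟩ | ⟨hiw, hiv⟩
  · -- g i = v, g (i+1) = w
    refine ⟨g (i - 1), ?_, ?_, ?_, ?_⟩
    · intro h; rw [← hiw] at h
      exact h2 (by linear_combination - hg h)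
    · intro h; rw [← hiv] at h
      exact h1 (by linear_combination - hg h)
    · have := zcyc_mem g (i - 1)
      rw [sub_add_cancel, Sym2.eq_swap] at this
      rwa [hiv] at this
    · intro z hz
      obtain ⟨j, -, hj⟩ := Finset.mem_image.mp hz
      rw [Sym2.eq_iff] at hj
      rcases hj with ⟨hj1, hj2⟩ | ⟨hj1, hj2⟩
      · have : j = i := hg (hj1.trans hiv.symm)
        left; rw [← hj2, this, hiw]
      · have : j + 1 = i := hg (hj2.trans hiv.symm)
        right; rw [← hj1]
        exact congrArg g (by linear_combination this)
  · -- g i = w, g (i+1) = v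
    refine ⟨g (i + 1 + 1), ?_, ?_, ?_, ?_⟩
    · intro h; rw [← hiw] at h
      exact h2 (by linear_combination hg h)
    · intro h; rw [← hiv] at h
      exact h1 (by linear_combination hg h)
    · have := zcyc_mem g (i + 1)
      rwa [hiv] at this
    · intro z hz
      obtain ⟨j, -, hj⟩ := Finset.mem_image.mp hz
      rw [Sym2.eq_iff] at hj
      rcases hj with ⟨hj1, hj2⟩ | ⟨hj1, hj2⟩
      · have : j = i + 1 := hg (hj1.trans hiv.symm)
        right; rw [← hj2, this]
      · have hji : j = i := by
          have := hg (hj2.trans hiv.symm)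
          linear_combination this
        left; rw [← hj1, hji, hiw]
  

private lemma zcyc_walk (g : ZMod ℓ → V) (A : Set V)
    (hA : ∀ v ∈ A, ∀ w, s(v, w) ∈ zcyc ℓ g → w ∈ A) {i₀ : ZMod ℓ} (h0 : g i₀ ∈ A) :
    ∀ i, g i ∈ A := by
  have step : ∀ k : ℕ, g (i₀ + (k : ZMod ℓ)) ∈ A := by
    intro k
    induction k with
    | zero => simpa using h0
    | succ m ih =>
      have hmem := zcyc_mem g (i₀ + (m : ZMod ℓ))
      have hstep := hA _ ih _ hmem
      have : i₀ + ((m + 1 : ℕ) : ZMod ℓ) = i₀ + (m : ZMod ℓ) + 1 := by push_cast; ring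
      rwa [this]
  intro i
  have : i = i₀ + (((i - i₀).val : ℕ) : ZMod ℓ) := by
    rw [ZMod.natCast_rightInverse (i - i₀)]; ring
  rw [this]
  exact step _

end Aux2
section Aux3

private lemma translate_comp {n : ℕ} (a b : ZMod n) (E : Finset (Sym2 (ZMod n))) :
    translateCycle a (translateCycle b E) = translateCycle (b + a) E := by
  unfold translateCycle
  rw [Finset.image_image]
  congr 1
  funext e
  rw [Function.comp_apply, Sym2.map_map]
  congr 1
  funext v
  simp [add_assoc]

private lemma translateCycle_zero {n : ℕ} (E : Finset (Sym2 (ZMod n))) :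
    translateCycle (0 : ZMod n) E = E := by
  unfold translateCycle
  rw [show (fun v : ZMod n => v + 0) = id from funext fun v => add_zero v, Sym2.map_id,
    Finset.image_id]

private lemma translate_invariant {n : ℕ} {E : Finset (Sym2 (ZMod n))} {d : ZMod n}
    (h : translateCycle d E = E) :
    ∀ m : ℕ, translateCycle ((m : ZMod n) * d) E = E := by
  intro m
  induction m with
  | zero =>
    rw [show (((0 : ℕ) : ZMod n) * d) = 0 by push_cast; ring]
    exact translateCycle_zero E
  | succ k ih =>
    have he : ((k + 1 : ℕ) : ZMod n) * d = (k : ZMod n) * d + d := by push_cast; ring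
    rw [he, ← translate_comp, ih, h]

private lemma unique_cycle {V : Type*} [DecidableEq V] {ℓ : ℕ}
    {F : Set (Finset (Sym2 V))} (hF : IsCycleSystem ℓ F) {E E' : Finset (Sym2 V)}
    (hE : E ∈ F) (hE' : E' ∈ F) {e : Sym2 V} (he : e ∈ E) (he' : e ∈ E') : E = E' := by
  by_contra hne
  exact (Finset.disjoint_left.mp (hF.2.1 hE hE' hne) he) he'

private lemma key_lemma {n ℓ : ℕ} (hn : 4 ≤ n) (hl : 3 ≤ ℓ)
    (S : Set (Set (Finset (Sym2 (ZMod n)))))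
    (hS : ∀ F ∈ S, IsCycleSystem ℓ F ∧ IsCyclicSystem F) (horth : S.Pairwise Orthog)
    (hcard : ¬ S.ncard ≤ n - 3) (d : ZMod n) (hd0 : d ≠ 0) (hdd : d + d ≠ 0) :
    ∃ F ∈ S, ∃ E ∈ F, s((0 : ZMod n), d) ∈ E ∧ s((0 : ZMod n), -d) ∈ E ∧
      ∀ z, s((0 : ZMod n), z) ∈ E → z = d ∨ z = -d := by
  classical
  haveI : NeZero n := ⟨by omega⟩
  haveI : NeZero ℓ := ⟨by omega⟩
  have hex : ∀ F : Set (Finset (Sym2 (ZMod n))), ∃ u : ZMod n, F ∈ S →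
      ∃ E ∈ F, s((0 : ZMod n), d) ∈ E ∧ s((0 : ZMod n), u) ∈ E ∧ u ≠ d ∧ u ≠ 0 ∧
        ∀ z, s((0 : ZMod n), z) ∈ E → z = d ∨ z = u := by
    intro F
    by_cases hF : F ∈ S
    · have hnd : ¬ (s((0 : ZMod n), d)).IsDiag := by
        rw [Sym2.mk_isDiag_iff]; exact fun h => hd0 h.symm
      obtain ⟨E, hEF, heE⟩ := ((hS F hF).1.2.2 _).mp hnd
      obtain ⟨g, hg, rfl⟩ := cycle_repr hl ((hS F hF).1.1 E hEF)
      obtain ⟨u, hu1, hu2, hu3, hu4⟩ := zcyc_nbrs hl hg heE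
      exact ⟨u, fun _ => ⟨_, hEF, heE, hu3, hu1, hu2, hu4⟩⟩
    · exact ⟨0, fun h => absurd h hF⟩
  choose φ hφ using hex
  have hinj : Set.InjOn φ S := by
    intro F hF F' hF' heq
    by_contra hne
    obtain ⟨E, hEF, h1, h2, h3, h4, -⟩ := hφ F hF
    obtain ⟨E', hEF', h1', h2', -, -, -⟩ := hφ F' hF'
    rw [← heq] at h2'
    have horth' := horth hF hF' hne E hEF E' hEF'
    have hne2 : s((0 : ZMod n), d) ≠ s((0 : ZMod n), φ F) := by
      intro hh
      rw [Sym2.eq_iff] at hh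
      rcases hh with ⟨-, hh⟩ | ⟨hh, -⟩
      · exact h3 hh.symm
      · exact h4 hh.symm
    have hsub : ({s((0 : ZMod n), d), s((0 : ZMod n), φ F)} : Finset (Sym2 (ZMod n))) ⊆ E ∩ E' := by
      intro e he
      rcases Finset.mem_insert.mp he with rfl | he
      · exact Finset.mem_inter.mpr ⟨h1, h1'⟩
      · rw [Finset.mem_singleton] at he; subst he
        exact Finset.mem_inter.mpr ⟨h2, h2'⟩
    have hc2 : ({s((0 : ZMod n), d), s((0 : ZMod n), φ F)} : Finset (Sym2 (ZMod n))).card = 2 := by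
      rw [Finset.card_insert_of_notMem (by simpa using hne2), Finset.card_singleton]
    have := Finset.card_le_card hsub
    omega
  by_contra hcon
  apply hcard
  have hne : ∀ F ∈ S, φ F ≠ -d := by
    intro F hF h
    obtain ⟨E, hEF, h1, h2, -, -, h5⟩ := hφ F hF
    rw [h] at h2 h5
    exact hcon ⟨F, hF, E, hEF, h1, h2, h5⟩
  set B : Finset (ZMod n) := ((Finset.univ.erase 0).erase d).erase (-d) with hB
  have hmaps : ∀ F ∈ S, φ F ∈ (B : Set (ZMod n)) := by
    intro F hF
    obtain ⟨E, hEF, h1, h2, h3, h4, h5⟩ := hφ F hF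
    refine Finset.mem_coe.mpr (Finset.mem_erase.mpr ⟨hne F hF,
      Finset.mem_erase.mpr ⟨h3, Finset.mem_erase.mpr ⟨h4, Finset.mem_univ _⟩⟩⟩)
  have hBcard : B.card = n - 3 := by
    have h1 : d ∈ Finset.univ.erase (0 : ZMod n) :=
      Finset.mem_erase.mpr ⟨hd0, Finset.mem_univ _⟩
    have h2 : -d ∈ (Finset.univ.erase (0 : ZMod n)).erase d := by
      refine Finset.mem_erase.mpr ⟨?_, Finset.mem_erase.mpr ⟨?_, Finset.mem_univ _⟩⟩
      · intro h; exact hdd (by linear_combination -h)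
      · intro h; exact hd0 (by linear_combination -h)
    rw [hB, Finset.card_erase_of_mem h2, Finset.card_erase_of_mem h1,
      Finset.card_erase_of_mem (Finset.mem_univ _), Finset.card_univ, ZMod.card]
    omega
  calc S.ncard ≤ (↑B : Set (ZMod n)).ncard :=
        Set.ncard_le_ncard_of_injOn φ hmaps hinj B.finite_toSet
    _ = n - 3 := by rw [Set.ncard_coe_finset, hBcard]

end Aux3

/-- Lemma: for `n ≥ 4`, any set of mutually orthogonal cyclic `ℓ`-cycle systems of `K_n`
(with vertex set `ZMod n`) has at most `n - 3` elements; that is, `μ'(ℓ,n) ≤ n - 3`. -/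
theorem stmt_17 (ℓ n : ℕ) (hn : 4 ≤ n) (S : Set (Set (Finset (Sym2 (ZMod n)))))
    (hS : ∀ F ∈ S, IsCycleSystem ℓ F ∧ IsCyclicSystem F) (horth : S.Pairwise Orthog) :
    S.ncard ≤ n - 3 := by
  classical
  haveI : NeZero n := ⟨by omega⟩
  by_contra hcard
  have hge : n - 3 < S.ncard := Nat.lt_of_not_le hcard
  have hSne : S.Nonempty := Set.nonempty_of_ncard_ne_zero (by omega)
  obtain ⟨F₀, hF₀⟩ := hSne
  have h10 : (1 : ZMod n) ≠ 0 := by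
    intro h
    rw [show (1 : ZMod n) = ((1 : ℕ) : ZMod n) by push_cast; ring,
      ZMod.natCast_eq_zero_iff] at h
    have := Nat.le_of_dvd one_pos h; omega
  have h2z : (1 : ZMod n) + 1 ≠ 0 := by
    intro h
    rw [show (1 : ZMod n) + 1 = ((2 : ℕ) : ZMod n) by push_cast; ring,
      ZMod.natCast_eq_zero_iff] at h
    have := Nat.le_of_dvd (by norm_num) h; omega
  have hnd01 : ¬ (s((0 : ZMod n), 1)).IsDiag := by
    rw [Sym2.mk_isDiag_iff]; exact fun h => h10 h.symm
  rcases Nat.lt_or_ge ℓ 3 with hl | hl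
  · interval_cases ℓ
    · obtain ⟨E, hEF, heE⟩ := ((hS F₀ hF₀).1.2.2 _).mp hnd01
      obtain ⟨f, hf, rfl⟩ := (hS F₀ hF₀).1.1 E hEF
      simp [cycleEdges, Finset.univ_eq_empty] at heE
    · obtain ⟨E, hEF, heE⟩ := ((hS F₀ hF₀).1.2.2 _).mp hnd01
      obtain ⟨f, hf, rfl⟩ := (hS F₀ hF₀).1.1 E hEF
      rw [cycleEdges] at heE
      obtain ⟨i, -, hi⟩ := Finset.mem_image.mp heE
      have hieq : (⟨(i.val + 1) % 1, Nat.mod_lt _ i.pos⟩ : Fin 1) = i := Subsingleton.elim _ _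
      rw [hieq] at hi
      rw [Sym2.eq_iff] at hi
      rcases hi with ⟨ha, hb⟩ | ⟨ha, hb⟩
      · exact h10 (by rw [← ha]; exact hb.symm)
      · exact h10 (by rw [← hb]; exact ha.symm)
    · -- ℓ = 2
      have htwo : ∀ f : Fin 2 → ZMod n, cycleEdges 2 f = {s(f 0, f 1)} := by
        intro f
        rw [cycleEdges, show (Finset.univ : Finset (Fin 2)) = {0, 1} by decide]
        rw [Finset.image_insert, Finset.image_singleton]
        have e0 : (⟨((0 : Fin 2).val + 1) % 2, Nat.mod_lt _ (Fin.pos (0 : Fin 2))⟩ : Fin 2) = 1 := by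
          decide
        have e1 : (⟨((1 : Fin 2).val + 1) % 2, Nat.mod_lt _ (Fin.pos (1 : Fin 2))⟩ : Fin 2) = 0 := by
          decide
        rw [e0, e1, show s(f 1, f 0) = s(f 0, f 1) from Sym2.eq_swap]
        exact Finset.insert_eq_self.mpr (Finset.mem_singleton_self _)
      have hshape : ∀ F ∈ S, ∀ E ∈ F, ∃ e : Sym2 (ZMod n), ¬ e.IsDiag ∧ E = {e} := by
        intro F hF E hE
        obtain ⟨f, hf, rfl⟩ := (hS F hF).1.1 E hE
        refine ⟨s(f 0, f 1), ?_, htwo f⟩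
        rw [Sym2.mk_isDiag_iff]
        intro h; exact absurd (hf h) (by decide)
      have hmem : ∀ F ∈ S, ∀ e : Sym2 (ZMod n), ¬ e.IsDiag → {e} ∈ F := by
        intro F hF e hnd
        obtain ⟨E, hEF, heE⟩ := ((hS F hF).1.2.2 _).mp hnd
        obtain ⟨e', -, rfl⟩ := hshape F hF E hEF
        rw [Finset.mem_singleton] at heE; subst heE; exact hEF
      have hss : S.Subsingleton := by
        intro F hF F' hF'
        apply Set.ext; intro E
        constructor
        · intro hE
          obtain ⟨e, hnd, rfl⟩ := hshape F hF E hE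
          exact hmem F' hF' e hnd
        · intro hE
          obtain ⟨e, hnd, rfl⟩ := hshape F' hF' E hE
          exact hmem F hF e hnd
      rcases hss.eq_empty_or_singleton with h | ⟨x, h⟩
      · apply hcard; rw [h, Set.ncard_empty]; omega
      · apply hcard; rw [h, Set.ncard_singleton]; omega
  · -- ℓ ≥ 3
    haveI : NeZero ℓ := ⟨by omega⟩
    have hnondiagE : ∀ F ∈ S, ∀ E ∈ F, ∀ e ∈ E, ¬ e.IsDiag := by
      intro F hF E hE
      obtain ⟨g, hg, rfl⟩ := cycle_repr hl ((hS F hF).1.1 E hE)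
      exact zcyc_nondiag hl hg
    have hcardE : ∀ F ∈ S, ∀ E ∈ F, E.card = ℓ := by
      intro F hF E hE
      obtain ⟨g, hg, rfl⟩ := cycle_repr hl ((hS F hF).1.1 E hE)
      exact zcyc_card hl hg
    have hln : ℓ ≤ n := by
      obtain ⟨E, hEF, -⟩ := ((hS F₀ hF₀).1.2.2 _).mp hnd01
      obtain ⟨f, hf, -⟩ := (hS F₀ hF₀).1.1 E hEF
      have := Fintype.card_le_of_injective f hf
      simpa [ZMod.card] using this
    have hinv : ∀ F ∈ S, ∀ E ∈ F, ∀ d : ZMod n,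
        s((0 : ZMod n), d) ∈ E → s((0 : ZMod n), -d) ∈ E → translateCycle d E = E := by
      intro F hF E hE d h1 h2
      have hm : Sym2.map (· + d) s((0 : ZMod n), -d) ∈ translateCycle d E :=
        Finset.mem_image_of_mem _ h2
      rw [Sym2.map_pair_eq] at hm
      rw [show ((0 : ZMod n) + d) = d by ring, show (-d + d : ZMod n) = 0 by ring] at hm
      rw [show s(d, (0 : ZMod n)) = s((0 : ZMod n), d) from Sym2.eq_swap] at hm
      exact unique_cycle (hS F hF).1 ((hS F hF).2 E hE d) hE hm h1
    set P : ZMod n → Finset (Sym2 (ZMod n)) :=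
      fun d => Finset.univ.image (fun a : ZMod n => s(a, a + d)) with hPdef
    have hPsub : ∀ (d : ZMod n) (E : Finset (Sym2 (ZMod n))), s((0 : ZMod n), d) ∈ E →
        (∀ a : ZMod n, translateCycle a E = E) → P d ⊆ E := by
      intro d E h0 hinva e he
      obtain ⟨a, -, rfl⟩ := Finset.mem_image.mp he
      have hm : Sym2.map (· + a) s((0 : ZMod n), d) ∈ translateCycle a E :=
        Finset.mem_image_of_mem _ h0
      rw [Sym2.map_pair_eq] at hm
      rw [hinva a] at hm
      rw [show ((0 : ZMod n) + a) = a by ring] at hm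
      rwa [show (d + a : ZMod n) = a + d by ring] at hm
    have hPcard : ∀ d : ZMod n, d + d ≠ 0 → (P d).card = n := by
      intro d hdd'
      have hinj' : Function.Injective (fun a : ZMod n => s(a, a + d)) := by
        intro a b h
        rw [Sym2.eq_iff] at h
        rcases h with ⟨h1, -⟩ | ⟨h1, h2⟩
        · exact h1
        · exact absurd (by linear_combination h2 - h1 : d + d = 0) hdd'
      rw [hPdef]
      rw [Finset.card_image_of_injective _ hinj', Finset.card_univ, ZMod.card]
    obtain ⟨F₁, hF₁S, E₁, hE₁F, he11, he12, -⟩ := key_lemma hn hl S hS horth hcard 1 h10 h2z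
    have hinv1 : translateCycle 1 E₁ = E₁ := hinv F₁ hF₁S E₁ hE₁F 1 he11 he12
    have hinvall : ∀ a : ZMod n, translateCycle a E₁ = E₁ := by
      intro a
      have := translate_invariant hinv1 a.val
      rwa [ZMod.natCast_rightInverse a, mul_one] at this
    have hE₁card : E₁.card = ℓ := hcardE F₁ hF₁S E₁ hE₁F
    have hP1sub : P 1 ⊆ E₁ := hPsub 1 E₁ he11 hinvall
    have hP1card : (P 1).card = n := hPcard 1 h2z
    have hlen : ℓ = n := by
      have h1 : n ≤ ℓ := by
        rw [← hP1card, ← hE₁card]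
        exact Finset.card_le_card hP1sub
      omega
    have hE₁P : E₁ = P 1 := by
      apply (Finset.eq_of_subset_of_card_le hP1sub ?_).symm
      rw [hE₁card, hP1card]
      omega
    by_cases h4 : n = 4
    · subst h4
      have h20 : ((2 : ZMod 4)) ≠ 0 := by decide
      have hnd02 : ¬ (s((0 : ZMod 4), 2)).IsDiag := by
        rw [Sym2.mk_isDiag_iff]; exact fun h => h20 h.symm
      obtain ⟨E', hE'F, he'⟩ := ((hS F₁ hF₁S).1.2.2 _).mp hnd02
      have hne' : E' ≠ E₁ := by
        intro h
        rw [h, hE₁P] at he'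
        obtain ⟨a, -, ha⟩ := Finset.mem_image.mp he'
        have hno : ∀ a : ZMod 4, s(a, a + 1) ≠ s((0 : ZMod 4), 2) := by decide
        exact hno a ha
      have hdisj : Disjoint E' E₁ := (hS F₁ hF₁S).1.2.1 hE'F hE₁F hne'
      have hsub2 : E' ∪ E₁ ⊆ Finset.univ.filter (fun e : Sym2 (ZMod 4) => ¬ e.IsDiag) := by
        intro e he
        rcases Finset.mem_union.mp he with h | h
        · exact Finset.mem_filter.mpr ⟨Finset.mem_univ _, hnondiagE F₁ hF₁S E' hE'F e h⟩
        · exact Finset.mem_filter.mpr ⟨Finset.mem_univ _, hnondiagE F₁ hF₁S E₁ hE₁F e h⟩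
      have hfc : (Finset.univ.filter (fun e : Sym2 (ZMod 4) => ¬ e.IsDiag)).card = 6 := by
        rw [← Fintype.card_subtype, Sym2.card_subtype_not_diag, ZMod.card]
        rfl
      have hcu := Finset.card_le_card hsub2
      rw [Finset.card_union_of_disjoint hdisj, hcardE F₁ hF₁S E' hE'F, hE₁card, hfc] at hcu
      omega
    by_cases hprime : n.Prime
    · haveI : Fact n.Prime := ⟨hprime⟩
      have hn5 : 5 ≤ n := by omega
      have hchar2 : ∀ d : ZMod n, d ≠ 0 → d + d ≠ 0 := by
        intro d hd0' h
        have h2' : (2 : ZMod n) * d = 0 := by linear_combination h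
        rcases mul_eq_zero.mp h2' with h2'' | h2''
        · rw [show (2 : ZMod n) = ((2 : ℕ) : ZMod n) by push_cast; ring,
            ZMod.natCast_eq_zero_iff] at h2''
          have := Nat.le_of_dvd (by norm_num) h2''
          omega
        · exact hd0' h2''
      have hPmem : ∀ d : ZMod n, d ≠ 0 → ∃ F ∈ S, P d ∈ F := by
        intro d hd0'
        obtain ⟨F, hF, E, hEF, h1, h2, -⟩ :=
          key_lemma hn hl S hS horth hcard d hd0' (hchar2 d hd0')
        have hinvd : translateCycle d E = E := hinv F hF E hEF d h1 h2
        have hinva : ∀ a : ZMod n, translateCycle a E = E := by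
          intro a
          have := translate_invariant hinvd (a * d⁻¹).val
          rw [ZMod.natCast_rightInverse (a * d⁻¹)] at this
          rwa [show a * d⁻¹ * d = a by rw [mul_assoc, inv_mul_cancel₀ hd0', mul_one]] at this
        have hsubd := hPsub d E h1 hinva
        have hEP : E = P d := by
          apply (Finset.eq_of_subset_of_card_le hsubd ?_).symm
          rw [hcardE F hF E hEF, hPcard d (hchar2 d hd0')]
          omega
        exact ⟨F, hF, hEP ▸ hEF⟩
      have hPmem' : ∀ d : ZMod n, ∃ F, d ≠ 0 → F ∈ S ∧ P d ∈ F := by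
        intro d
        by_cases hd0' : d = 0
        · exact ⟨F₀, fun h => absurd hd0' h⟩
        · obtain ⟨F, hF, hP⟩ := hPmem d hd0'
          exact ⟨F, fun _ => ⟨hF, hP⟩⟩
      choose Fd hFd using hPmem'
      obtain ⟨F, hFS, hFne⟩ := Set.exists_ne_of_one_lt_ncard (s := S) (by omega) F₁
      obtain ⟨C, hCF, hC01⟩ := ((hS F hFS).1.2.2 _).mp hnd01
      have hCcard : C.card = ℓ := hcardE F hFS C hCF
      have hPneg : ∀ d : ZMod n, P (-d) = P d := by
        intro d
        apply Finset.ext; intro e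
        simp only [hPdef, Finset.mem_image, Finset.mem_univ, true_and]
        constructor
        · rintro ⟨a, rfl⟩
          exact ⟨a + -d, by rw [show a + -d + d = a by ring]; exact Sym2.eq_swap⟩
        · rintro ⟨a, rfl⟩
          exact ⟨a + d, by rw [show a + d + -d = a by ring]; exact Sym2.eq_swap⟩
      have hbound : ∀ d ∈ Finset.univ.erase (0 : ZMod n), (C ∩ P d).card ≤ 1 := by
        intro d hd
        have hd0' : d ≠ 0 := (Finset.mem_erase.mp hd).1
        obtain ⟨hFdS, hFdP⟩ := hFd d hd0'
        rcases eq_or_ne F (Fd d) with hFeq | hFneq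
        · rcases eq_or_ne C (P d) with hCP | hCP
          · exfalso
            have h01P : s((0 : ZMod n), 1) ∈ P d := hCP ▸ hC01
            obtain ⟨a, -, ha⟩ := Finset.mem_image.mp h01P
            rw [Sym2.eq_iff] at ha
            have hPd1 : P d = P 1 := by
              rcases ha with ⟨ha1, ha2⟩ | ⟨ha1, ha2⟩
              · rw [show d = 1 by linear_combination ha2 - ha1]
              · rw [show d = -1 by linear_combination ha2 - ha1, hPneg 1]
            have horth2 := horth hFS hF₁S hFne C hCF E₁ hE₁F
            rw [hE₁P, ← hPd1, ← hCP, Finset.inter_self, hCcard] at horth2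
            omega
          · have hPdF : P d ∈ F := by rw [hFeq]; exact hFdP
            have hdisj : Disjoint C (P d) := (hS F hFS).1.2.1 hCF hPdF hCP
            rw [Finset.disjoint_iff_inter_eq_empty] at hdisj
            rw [hdisj]
            simp
        · exact horth hFS hFdS hFneq C hCF (P d) hFdP
      have hCsub : C ⊆ (Finset.univ.erase (0 : ZMod n)).biUnion (fun d => C ∩ P d) := by
        intro e he
        have hnd := hnondiagE F hFS C hCF e he
        revert he hnd
        refine Sym2.inductionOn e ?_
        intro a b he hnd
        rw [Sym2.mk_isDiag_iff] at hnd
        refine Finset.mem_biUnion.mpr ⟨b - a,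
          Finset.mem_erase.mpr ⟨sub_ne_zero.mpr (fun h => hnd h.symm), Finset.mem_univ _⟩,
          Finset.mem_inter.mpr ⟨he, ?_⟩⟩
        refine Finset.mem_image.mpr ⟨a, Finset.mem_univ _, ?_⟩
        rw [show a + (b - a) = b by ring]
      have hfinal := Finset.card_le_card hCsub
      have hbi := Finset.card_biUnion_le_card_mul (Finset.univ.erase (0 : ZMod n))
        (fun d => C ∩ P d) 1 hbound
      rw [Finset.card_erase_of_mem (Finset.mem_univ _), Finset.card_univ, ZMod.card] at hbi
      rw [hCcard] at hfinal
      omega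
    · -- composite
      set p := n.minFac with hpdef
      have hp : p.Prime := Nat.minFac_prime (by omega)
      have hpd : p ∣ n := Nat.minFac_dvd n
      have hp2 : 2 ≤ p := hp.two_le
      have hsq : p * p ≤ n := by
        have := Nat.minFac_sq_le_self (by omega) hprime
        simpa [pow_two] using this
      set d : ZMod n := (p : ZMod n) with hddef
      have hd0' : d ≠ 0 := by
        rw [hddef, Ne, ZMod.natCast_eq_zero_iff]
        intro h
        have := Nat.le_of_dvd (by omega) h
        nlinarith
      have hdd' : d + d ≠ 0 := by
        rw [hddef, show ((p : ZMod n) + p) = ((p + p : ℕ) : ZMod n) by push_cast; ring, Ne,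
          ZMod.natCast_eq_zero_iff]
        intro h
        have hle := Nat.le_of_dvd (by omega) h
        have hple : p ≤ 2 := by nlinarith
        have hpe : p = 2 := le_antisymm hple hp2
        rw [hpe] at h
        have := Nat.le_of_dvd (by norm_num) h
        omega
      obtain ⟨F, hFS, E, hEF, h1, h2, huniq⟩ := key_lemma hn hl S hS horth hcard d hd0' hdd'
      have hinvd : translateCycle d E = E := hinv F hFS E hEF d h1 h2
      have hinvm : ∀ k : ZMod n, translateCycle (k * d) E = E := by
        intro k
        have := translate_invariant hinvd k.val
        rwa [ZMod.natCast_rightInverse k] at this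
      set G : Finset (ZMod n) := Finset.univ.image (fun k : ZMod n => k * d) with hGdef
      have hG0 : (0 : ZMod n) ∈ G := Finset.mem_image.mpr ⟨0, Finset.mem_univ _, zero_mul d⟩
      have h1G : (1 : ZMod n) ∉ G := by
        intro hmem
        obtain ⟨k, -, hk⟩ := Finset.mem_image.mp hmem
        have hu : IsUnit d := IsUnit.of_mul_eq_one k (by rw [mul_comm]; exact hk)
        rw [hddef] at hu
        have hcop := (ZMod.isUnit_iff_coprime p n).mp hu
        have hpdvd : p ∣ 1 := hcop ▸ Nat.dvd_gcd dvd_rfl hpd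
        have := Nat.le_of_dvd one_pos hpdvd
        omega
      have hclosed : ∀ v ∈ (↑G : Set (ZMod n)), ∀ w, s(v, w) ∈ E → w ∈ (↑G : Set (ZMod n)) := by
        intro v hv w hw
        obtain ⟨k, -, hk⟩ := Finset.mem_image.mp (Finset.mem_coe.mp hv)
        have hm : Sym2.map (· + (-v)) s(v, w) ∈ translateCycle (-v) E :=
          Finset.mem_image_of_mem _ hw
        rw [Sym2.map_pair_eq] at hm
        have hE' : translateCycle (-v) E = E := by
          have := hinvm (-k)
          rwa [show (-k) * d = -v by rw [← hk]; ring] at this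
        rw [hE'] at hm
        rw [show (v + -v : ZMod n) = 0 by ring] at hm
        rcases huniq _ hm with hz | hz
        · refine Finset.mem_coe.mpr (Finset.mem_image.mpr ⟨k + 1, Finset.mem_univ _, ?_⟩)
          linear_combination hk - hz
        · refine Finset.mem_coe.mpr (Finset.mem_image.mpr ⟨k - 1, Finset.mem_univ _, ?_⟩)
          linear_combination hk - hz
      obtain ⟨g, hg, hErepr⟩ := cycle_repr hl ((hS F hFS).1.1 E hEF)
      have h0mem : ∃ i : ZMod ℓ, g i = 0 := by
        have h1' := h1
        rw [hErepr] at h1'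
        obtain ⟨i, -, hi⟩ := Finset.mem_image.mp h1'
        rw [Sym2.eq_iff] at hi
        rcases hi with ⟨hi1, -⟩ | ⟨-, hi2⟩
        · exact ⟨i, hi1⟩
        · exact ⟨i + 1, hi2⟩
      obtain ⟨i₀, hi₀⟩ := h0mem
      have hwalk := zcyc_walk g (↑G : Set (ZMod n))
        (fun v hv w hw => hclosed v hv w (by rw [hErepr]; exact hw))
        (by rw [hi₀]; exact Finset.mem_coe.mpr hG0)
      have hsubG : Finset.univ.image g ⊆ G := by
        intro v hv
        obtain ⟨i, -, rfl⟩ := Finset.mem_image.mp hv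
        exact Finset.mem_coe.mp (hwalk i)
      have hcardG : ℓ ≤ G.card := by
        have := Finset.card_le_card hsubG
        rwa [Finset.card_image_of_injective _ hg, Finset.card_univ, ZMod.card] at this
      have hGlt : G.card < n := by
        have hss : G ⊂ Finset.univ :=
          Finset.ssubset_univ_iff.mpr (fun h => h1G (by rw [h]; exact Finset.mem_univ 1))
        have := Finset.card_lt_card hss
        rwa [Finset.card_univ, ZMod.card] at this
      omega
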